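/- Let m ≥ 1 and let p be a discrete order-m Markov model on [n_1]×⋯×[n_d]. Then for any indices 1 ≤ i ≤ k and any j ≥ m with k + j ≤ d, the matrix p((x_i,…,x_k);(x_{k+1},…,x_{k+j})) (the marginal of p on the variables x_i,…,x_{k+j}, viewed as a matrix with rows indexed by (x_i,…,x_k) and columns by (x_{k+1},…,x_{k+j})) and the matrix p((x_i,…,x_k);(x_{k+1},…,x_{k+m})) (the marginal of p on the variables x_i,…,x_{k+m}, with rows indexed by (x_i,…,x_k) and columns by (x_{k+1},…,x_{k+m})) have the same column space. -/
import Mathlib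


open scoped BigOperators
open Matrix

/-- Indices `(x_0, …, x_{k-1})` of the first `k` variables (sizes given by `n`). -/
abbrev PreIdx (n : ℕ → ℕ) (k : ℕ) := ∀ i : Fin k, Fin (n i)

/-- Indices `(x_k, …, x_{d-1})` of the variables with position `≥ k`. -/
abbrev SufIdx (n : ℕ → ℕ) (d k : ℕ) := ∀ i : {i : Fin d // k ≤ (i : ℕ)}, Fin (n i)

/-- Indices of the variables with position in the window `[a, b)`. -/
abbrev MidIdx (n : ℕ → ℕ) (d a b : ℕ) :=
  ∀ i : {i : Fin d // a ≤ (i : ℕ) ∧ (i : ℕ) < b}, Fin (n i)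

/-- Glue a prefix index and a suffix index into a full index. -/
def glue {n : ℕ → ℕ} {d k : ℕ} (x : PreIdx n k) (y : SufIdx n d k) : PreIdx n d :=
  fun i => if h : (i : ℕ) < k then x ⟨i, h⟩ else y ⟨i, Nat.le_of_not_lt h⟩

/-- The `k`-th unfolding matrix of a `d`-dimensional tensor `p`. -/
def unfold {n : ℕ → ℕ} {d : ℕ} (p : PreIdx n d → ℝ) (k : ℕ) :
    Matrix (PreIdx n k) (SufIdx n d k) ℝ :=
  Matrix.of fun x y => p (glue x y)

/-- Column space of a matrix: span of its columns. -/
noncomputable def colSpace {R C : Type*} (M : Matrix R C ℝ) : Submodule ℝ (R → ℝ) :=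
  Submodule.span ℝ (Set.range fun c => fun r => M r c)

/-- Row space of a matrix: span of its rows. -/
noncomputable def rowSpace {R C : Type*} (M : Matrix R C ℝ) : Submodule ℝ (C → ℝ) :=
  Submodule.span ℝ (Set.range fun r => fun c => M r c)

/-- Rank of a matrix (dimension of its column space). -/
noncomputable def mrank {R C : Type*} (M : Matrix R C ℝ) : ℕ :=
  Module.finrank ℝ ↥(colSpace M)

/-- Restriction of a prefix index to the first `k` variables. -/
def takePre {n : ℕ → ℕ} {k : ℕ} (x : PreIdx n (k + 1)) : PreIdx n k :=
  fun i => x ⟨i, Nat.lt_succ_of_lt i.isLt⟩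

/-- Extend a prefix index by one more variable. -/
def snoc' {n : ℕ → ℕ} {k : ℕ} (z : PreIdx n k) (a : Fin (n k)) : PreIdx n (k + 1) :=
  fun i =>
    if h : (i : ℕ) < k then z ⟨i, h⟩
    else Fin.cast (congrArg n (by have := i.isLt; omega : k = (i : ℕ))) a

/-- A family of tensor-train cores: core `k` has shape `r k × n k × r (k+1)`.
(The first and last cores carry a dummy index of size `r 0 = 1`, `r d = 1`.) -/
abbrev CoreType (n r : ℕ → ℕ) (d : ℕ) :=
  ∀ k : Fin d, Fin (r k) → Fin (n k) → Fin (r ((k : ℕ) + 1)) → ℝ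

/-- Partial contraction of the first `k` cores. -/
noncomputable def ttPrefixF {d : ℕ} {n r : ℕ → ℕ} (G : CoreType n r d) :
    (k : ℕ) → k ≤ d → PreIdx n k → Fin (r 0) → Fin (r k) → ℝ
  | 0, _, _, a, b => if (a : ℕ) = (b : ℕ) then 1 else 0
  | k + 1, h, x, a, b =>
      ∑ c : Fin (r k),
        ttPrefixF G k (Nat.le_of_succ_le h) (takePre x) a c * G ⟨k, h⟩ c (x (Fin.last k)) b

/-- Full contraction `G_1 ∘ ⋯ ∘ G_d` of a family of tensor-train cores. -/
noncomputable def ttContract {d : ℕ} {n r : ℕ → ℕ} (G : CoreType n r d)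
    (x : PreIdx n d) : ℝ :=
  ∑ a : Fin (r 0), ∑ b : Fin (r d), ttPrefixF G d le_rfl x a b

/-- The recursively contracted left sketch functions `S_k` built from blocks `s_k`. -/
noncomputable def leftSketch {n m : ℕ → ℕ}
    (s : ∀ k : ℕ, Fin (m (k + 1)) → Fin (n k) → Fin (m k) → ℝ) :
    (k : ℕ) → Fin (m k) → PreIdx n k → ℝ
  | 0, _, _ => 1
  | k + 1, β, x => ∑ c : Fin (m k), s k β (x (Fin.last k)) c * leftSketch s k c (takePre x)

/-- The right-sketched unfolding `Φ̄_k = p ∘ T_{k+1}`. -/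
noncomputable def rightSketched {n : ℕ → ℕ} {d : ℕ} (p : PreIdx n d → ℝ)
    {ℓ : ℕ → ℕ} (T : ∀ k : ℕ, SufIdx n d k → Fin (ℓ k) → ℝ) (k : ℕ)
    (x : PreIdx n k) (γ : Fin (ℓ k)) : ℝ :=
  ∑ y : SufIdx n d k, p (glue x y) * T k y γ

/-- The doubly sketched tensor `Φ̃_{j+1} = S_j ∘ Φ̄_{j+1}`. -/
noncomputable def tildePhi {n : ℕ → ℕ} {d : ℕ} {ℓ m : ℕ → ℕ} (p : PreIdx n d → ℝ)
    (T : ∀ k : ℕ, SufIdx n d k → Fin (ℓ k) → ℝ)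
    (s : ∀ k : ℕ, Fin (m (k + 1)) → Fin (n k) → Fin (m k) → ℝ)
    (j : ℕ) (β : Fin (m j)) (xj : Fin (n j)) (γ : Fin (ℓ (j + 1))) : ℝ :=
  ∑ z : PreIdx n j, leftSketch s j β z * rightSketched p T (j + 1) (snoc' z xj) γ

/-- Marginal of `p` on the window of variables `[a, b)`. -/
noncomputable def winMarg {n : ℕ → ℕ} {d : ℕ} (p : PreIdx n d → ℝ) (a b : ℕ)
    (y : MidIdx n d a b) : ℝ :=
  ∑ z : ∀ i : {i : Fin d // (i : ℕ) < a ∨ b ≤ (i : ℕ)}, Fin (n i),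
    p fun i =>
      if h : a ≤ (i : ℕ) ∧ (i : ℕ) < b then y ⟨i, h⟩ else z ⟨i, by omega⟩

/-- Marginal of `p` on the window `[a, b)`, viewed as a matrix with rows indexed by
variables in `[a, c)` and columns by variables in `[c, b)`. -/
noncomputable def winMatrix {n : ℕ → ℕ} {d : ℕ} (p : PreIdx n d → ℝ) (a c b : ℕ) :
    Matrix (MidIdx n d a c) (MidIdx n d c b) ℝ :=
  Matrix.of fun x y =>
    ∑ z : ∀ i : {i : Fin d // (i : ℕ) < a ∨ b ≤ (i : ℕ)}, Fin (n i),
      p fun i =>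
        if h1 : a ≤ (i : ℕ) ∧ (i : ℕ) < c then x ⟨i, h1⟩
        else if h2 : c ≤ (i : ℕ) ∧ (i : ℕ) < b then y ⟨i, h2⟩
        else z ⟨i, by omega⟩

/-- A (first-order) discrete Markov model: a probability density such that for all
`2 ≤ k ≤ d - 1` (1-based), `p(x) · p_k(x_k) = p_{1:k}(x_{1:k}) · p_{k:d}(x_{k:d})`. -/
def IsMarkov {n : ℕ → ℕ} {d : ℕ} (p : PreIdx n d → ℝ) : Prop :=
  (∀ x, 0 ≤ p x) ∧ (∑ x : PreIdx n d, p x) = 1 ∧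
    ∀ k : ℕ, 2 ≤ k → k ≤ d - 1 → ∀ x : PreIdx n d,
      p x * winMarg p (k - 1) k (fun i => x i.1) =
        winMarg p 0 k (fun i => x i.1) * winMarg p (k - 1) d (fun i => x i.1)

/-- An order-`m` discrete Markov model. -/
def IsMarkovOrder {n : ℕ → ℕ} {d : ℕ} (m : ℕ) (p : PreIdx n d → ℝ) : Prop :=
  (∀ x, 0 ≤ p x) ∧ (∑ x : PreIdx n d, p x) = 1 ∧
    ∀ k : ℕ, m + 1 ≤ k → k ≤ d - 1 → ∀ x : PreIdx n d,
      p x * winMarg p (k - m) k (fun i => x i.1) =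
        winMarg p 0 k (fun i => x i.1) * winMarg p (k - m) d (fun i => x i.1)

/-- Spectral norm (ℓ² → ℓ² operator norm) of a matrix. -/
noncomputable def specNorm {R C : Type*} [Fintype R] [Fintype C] [DecidableEq C]
    (M : Matrix R C ℝ) : ℝ :=
  ‖LinearMap.toContinuousLinearMap (Matrix.toEuclideanLin M)‖

/-- Moore–Penrose pseudoinverse of a full-column-rank matrix, `A⁺ = (AᵀA)⁻¹Aᵀ`. -/
noncomputable def pinv {m n : ℕ} (A : Matrix (Fin m) (Fin n) ℝ) :
    Matrix (Fin n) (Fin m) ℝ :=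
  (Aᵀ * A)⁻¹ * Aᵀ

/-- The norm `|||G|||`: max over the middle index of the spectral norm of the slices. -/
noncomputable def tnorm {a b c : ℕ} (G : Fin a → Fin b → Fin c → ℝ) : ℝ :=
  ⨆ i : Fin b, specNorm (Matrix.of fun x y => G x i y)

/-- Supremum norm of a 3-tensor. -/
noncomputable def supNorm3 {a b c : ℕ} (G : Fin a → Fin b → Fin c → ℝ) : ℝ :=
  ⨆ q : Fin a × Fin b × Fin c, |G q.1 q.2.1 q.2.2|

/-- Supremum norm of a `d`-dimensional tensor. -/
noncomputable def supNormF {n : ℕ → ℕ} {d : ℕ} (f : PreIdx n d → ℝ) : ℝ :=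
  ⨆ x : PreIdx n d, |f x|

section Aux

open scoped Classical

variable {d : ℕ} {n : ℕ → ℕ}

/-- Agreement of a full index `w` with a window index `y` on `[a, b)`. -/
def Agr (a b : ℕ) (y : MidIdx n d a b) (w : PreIdx n d) : Prop :=
  ∀ i : Fin d, ∀ h : a ≤ (i : ℕ) ∧ (i : ℕ) < b, w i = y ⟨i, h⟩

lemma winMarg_eq_sum (p : PreIdx n d → ℝ) (a b : ℕ) (y : MidIdx n d a b) :
    winMarg p a b y = ∑ w : PreIdx n d, if Agr a b y w then p w else 0 := by
  rw [← Finset.sum_filter, winMarg]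
  refine Finset.sum_nbij'
    (i := fun z => fun i : Fin d =>
      if h : a ≤ (i : ℕ) ∧ (i : ℕ) < b then y ⟨i, h⟩ else z ⟨i, by omega⟩)
    (j := fun w => fun i => w i.1) ?_ ?_ ?_ ?_ ?_
  · intro z _
    simp only [Finset.mem_filter, Finset.mem_univ, true_and]
    intro i h
    dsimp only
    exact dif_pos h
  · intro w _
    exact Finset.mem_univ _
  · intro z _
    funext i
    have hi := i.2
    dsimp only
    exact dif_neg (by omega)
  · intro w hw
    rw [Finset.mem_filter] at hw
    funext i
    dsimp only
    by_cases h : a ≤ (i : ℕ) ∧ (i : ℕ) < b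
    · rw [dif_pos h, ← hw.2 i h]
    · rw [dif_neg h]
  · intro z _
    rfl

lemma winMatrix_eq_sum (p : PreIdx n d → ℝ) (a c b : ℕ) (hac : a ≤ c) (hcb : c ≤ b)
    (x : MidIdx n d a c) (y : MidIdx n d c b) :
    winMatrix p a c b x y =
      ∑ w : PreIdx n d, if Agr a c x w ∧ Agr c b y w then p w else 0 := by
  rw [← Finset.sum_filter, winMatrix]
  refine Finset.sum_nbij'
    (i := fun z => fun i : Fin d =>
      if h1 : a ≤ (i : ℕ) ∧ (i : ℕ) < c then x ⟨i, h1⟩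
      else if h2 : c ≤ (i : ℕ) ∧ (i : ℕ) < b then y ⟨i, h2⟩ else z ⟨i, by omega⟩)
    (j := fun w => fun i => w i.1) ?_ ?_ ?_ ?_ ?_
  · intro z _
    simp only [Finset.mem_filter, Finset.mem_univ, true_and]
    constructor
    · intro i h
      dsimp only
      exact dif_pos h
    · intro i h
      dsimp only
      rw [dif_neg (by omega), dif_pos h]
  · intro w _
    exact Finset.mem_univ _
  · intro z _
    funext i
    have hi := i.2
    dsimp only
    rw [dif_neg (by omega), dif_neg (by omega)]
  · intro w hw
    rw [Finset.mem_filter] at hw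
    funext i
    dsimp only
    by_cases h1 : a ≤ (i : ℕ) ∧ (i : ℕ) < c
    · rw [dif_pos h1, ← hw.2.1 i h1]
    · rw [dif_neg h1]
      by_cases h2 : c ≤ (i : ℕ) ∧ (i : ℕ) < b
      · rw [dif_pos h2, ← hw.2.2 i h2]
      · rw [dif_neg h2]
  · intro z _
    rfl

lemma sum_agr (a b : ℕ) (w : PreIdx n d) (r : ℝ) :
    (∑ y : MidIdx n d a b, if Agr a b y w then r else 0) = r := by
  have h : ∀ y : MidIdx n d a b,
      Agr a b y w ↔ y = fun i : {i : Fin d // a ≤ (i : ℕ) ∧ (i : ℕ) < b} => w i.1 := by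
    intro y
    constructor
    · intro h
      funext i
      exact (h i.1 i.2).symm
    · rintro rfl i h
      rfl
  simp only [h]
  rw [Finset.sum_ite_eq' Finset.univ
    (fun i : {i : Fin d // a ≤ (i : ℕ) ∧ (i : ℕ) < b} => w i.1) (fun _ => r)]
  simp

/-- Merge two adjacent window indices. -/
def mrg {c pm pj : ℕ} (y₁ : MidIdx n d c pm) (y₂ : MidIdx n d pm pj) : MidIdx n d c pj :=
  fun i => if h : (i.1 : ℕ) < pm then y₁ ⟨i.1, ⟨i.2.1, h⟩⟩
    else y₂ ⟨i.1, ⟨Nat.le_of_not_lt h, i.2.2⟩⟩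

/-- Restrict a window index to a smaller window with the same left endpoint. -/
def resM {c pm pj : ℕ} (h : pm ≤ pj) (y : MidIdx n d c pj) : MidIdx n d c pm :=
  fun i => y ⟨i.1, ⟨i.2.1, lt_of_lt_of_le i.2.2 h⟩⟩

lemma agr_mrg {c pm pj : ℕ} (hcpm : c ≤ pm) (hpmj : pm ≤ pj)
    (y₁ : MidIdx n d c pm) (y₂ : MidIdx n d pm pj) (w : PreIdx n d) :
    Agr c pj (mrg y₁ y₂) w ↔ Agr c pm y₁ w ∧ Agr pm pj y₂ w := by
  constructor
  · intro h
    constructor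
    · intro i hi
      rw [h i ⟨hi.1, lt_of_lt_of_le hi.2 hpmj⟩]
      exact dif_pos hi.2
    · intro i hi
      rw [h i ⟨le_trans hcpm hi.1, hi.2⟩]
      exact dif_neg (not_lt.2 hi.1)
  · rintro ⟨h1, h2⟩ i hi
    by_cases h : (i : ℕ) < pm
    · have he : mrg y₁ y₂ ⟨i, hi⟩ = y₁ ⟨i, ⟨hi.1, h⟩⟩ := dif_pos h
      rw [he]
      exact h1 i ⟨hi.1, h⟩
    · have he : mrg y₁ y₂ ⟨i, hi⟩ = y₂ ⟨i, ⟨Nat.le_of_not_lt h, hi.2⟩⟩ := dif_neg h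
      rw [he]
      exact h2 i ⟨Nat.le_of_not_lt h, hi.2⟩

lemma winMatrix_right_marg (p : PreIdx n d → ℝ) (a c pm pj : ℕ)
    (hac : a ≤ c) (hcpm : c ≤ pm) (hpmj : pm ≤ pj)
    (x : MidIdx n d a c) (y₁ : MidIdx n d c pm) :
    winMatrix p a c pm x y₁ =
      ∑ y₂ : MidIdx n d pm pj, winMatrix p a c pj x (mrg y₁ y₂) := by
  have hrw : ∀ y₂ : MidIdx n d pm pj, winMatrix p a c pj x (mrg y₁ y₂) =
      ∑ w : PreIdx n d, if Agr a c x w ∧ Agr c pj (mrg y₁ y₂) w then p w else 0 :=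
    fun y₂ => winMatrix_eq_sum p a c pj hac (hcpm.trans hpmj) x (mrg y₁ y₂)
  rw [winMatrix_eq_sum p a c pm hac hcpm x y₁]
  simp only [hrw]
  rw [Finset.sum_comm]
  refine Finset.sum_congr rfl fun w _ => ?_
  simp only [agr_mrg hcpm hpmj]
  by_cases hC : Agr a c x w ∧ Agr c pm y₁ w
  · rw [if_pos hC]
    have hcong : ∀ y₂ : MidIdx n d pm pj,
        (if Agr a c x w ∧ Agr c pm y₁ w ∧ Agr pm pj y₂ w then p w else 0)
          = (if Agr pm pj y₂ w then p w else 0) := by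
      intro y₂
      by_cases hE : Agr pm pj y₂ w
      · rw [if_pos hE, if_pos (And.intro hC.1 (And.intro hC.2 hE))]
      · rw [if_neg hE, if_neg
          (fun hcon : Agr a c x w ∧ Agr c pm y₁ w ∧ Agr pm pj y₂ w => hE hcon.2.2)]
    rw [Finset.sum_congr rfl fun y₂ _ => hcong y₂, sum_agr]
  · rw [if_neg hC]
    refine (Finset.sum_eq_zero fun y₂ _ => ?_).symm
    exact if_neg
      (fun h : Agr a c x w ∧ Agr c pm y₁ w ∧ Agr pm pj y₂ w => hC (And.intro h.1 h.2.1))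

lemma winMatrix_col_zero (p : PreIdx n d → ℝ) (hp0 : ∀ w, 0 ≤ p w)
    (a c pm pj : ℕ) (hac : a ≤ c) (hcpm : c ≤ pm) (hpmj : pm ≤ pj)
    (x : MidIdx n d a c) (y : MidIdx n d c pj)
    (h0 : winMarg p c pm (resM hpmj y) = 0) :
    winMatrix p a c pj x y = 0 := by
  rw [winMarg_eq_sum] at h0
  rw [winMatrix_eq_sum p a c pj hac (hcpm.trans hpmj) x y]
  refine Finset.sum_eq_zero fun w _ => ?_
  by_cases hC : Agr a c x w ∧ Agr c pj y w
  · rw [if_pos hC]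
    have hA : Agr c pm (resM hpmj y) w := fun i hi =>
      hC.2 i ⟨hi.1, lt_of_lt_of_le hi.2 hpmj⟩
    have hnn : ∀ w' ∈ (Finset.univ : Finset (PreIdx n d)),
        (0:ℝ) ≤ if Agr c pm (resM hpmj y) w' then p w' else 0 := by
      intro w' _
      split
      · exact hp0 w'
      · exact le_refl 0
    have hz := (Finset.sum_eq_zero_iff_of_nonneg hnn).1 h0 w (Finset.mem_univ w)
    rwa [if_pos hA] at hz
  · exact if_neg hC

lemma markov_key {m : ℕ} (p : PreIdx n d → ℝ) (hp : IsMarkovOrder m p)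
    (a c j : ℕ) (hac : a < c) (hmj : m < j) (hcd : c + j ≤ d) (hle : c + m ≤ c + j)
    (x : MidIdx n d a c) (y : MidIdx n d c (c + j)) :
    winMatrix p a c (c + j) x y * winMarg p c (c + m) (resM hle y) =
      winMatrix p a c (c + m) x (resM hle y) * winMarg p c (c + j) y := by
  have hmk := hp.2.2 (c + m) (by omega) (by omega)
  rw [Nat.add_sub_cancel] at hmk
  have step3 : ∀ u v : PreIdx n d,
      (∑ w : PreIdx n d, if (Agr a c x w ∧ Agr c (c+j) y w) ∧
          Agr 0 (c+m) (fun i => w i.1) u ∧ Agr c d (fun i => w i.1) v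
        then p u * p v else 0)
      = if (Agr a c x u ∧ Agr c (c+m) (resM hle y) u) ∧ Agr c (c+j) y v
        then p u * p v else 0 := by
    intro u v
    have hiff : ∀ w : PreIdx n d,
        ((Agr a c x w ∧ Agr c (c+j) y w) ∧
          Agr 0 (c+m) (fun i => w i.1) u ∧ Agr c d (fun i => w i.1) v)
          ↔ (((Agr a c x u ∧ Agr c (c+m) (resM hle y) u) ∧ Agr c (c+j) y v) ∧
              w = fun i : Fin d => if h : (i:ℕ) < c + m then u i else v i) := by
      intro w
      constructor
      · rintro ⟨⟨hA, hY⟩, hU, hV⟩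
        have hwu : ∀ i : Fin d, (i:ℕ) < c + m → w i = u i :=
          fun i h => (hU i ⟨Nat.zero_le _, h⟩).symm
        have hwv : ∀ i : Fin d, c ≤ (i:ℕ) → w i = v i :=
          fun i h => (hV i ⟨h, i.isLt⟩).symm
        refine ⟨⟨⟨?_, ?_⟩, ?_⟩, ?_⟩
        · intro i hi
          rw [← hwu i (by omega)]
          exact hA i hi
        · intro i hi
          rw [← hwu i hi.2]
          exact hY i ⟨hi.1, lt_of_lt_of_le hi.2 hle⟩
        · intro i hi
          rw [← hwv i hi.1]
          exact hY i hi
        · funext i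
          show w i = if h : (i:ℕ) < c + m then u i else v i
          by_cases h : (i:ℕ) < c + m
          · rw [dif_pos h]
            exact hwu i h
          · rw [dif_neg h]
            exact hwv i (by omega)
      · rintro ⟨⟨⟨hA, hY1⟩, hYv⟩, rfl⟩
        refine ⟨⟨?_, ?_⟩, ?_, ?_⟩
        · intro i hi
          show (if h : (i:ℕ) < c + m then u i else v i) = x ⟨i, hi⟩
          rw [dif_pos (by omega)]
          exact hA i hi
        · intro i hi
          show (if h : (i:ℕ) < c + m then u i else v i) = y ⟨i, hi⟩
          by_cases h : (i:ℕ) < c + m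
          · rw [dif_pos h]
            exact hY1 i ⟨hi.1, h⟩
          · rw [dif_neg h]
            exact hYv i hi
        · intro i hi
          show u i = (if h : (i:ℕ) < c + m then u i else v i)
          rw [dif_pos hi.2]
        · intro i hi
          show v i = (if h : (i:ℕ) < c + m then u i else v i)
          by_cases h : (i:ℕ) < c + m
          · rw [dif_pos h]
            rw [hYv i ⟨hi.1, lt_of_lt_of_le h hle⟩, hY1 i ⟨hi.1, h⟩]
            rfl
          · rw [dif_neg h]
    simp only [hiff]
    by_cases hD : (Agr a c x u ∧ Agr c (c+m) (resM hle y) u) ∧ Agr c (c+j) y v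
    · simp [hD, Finset.sum_ite_eq']
    · simp [hD]
  have step12 : ∀ w : PreIdx n d,
      (if Agr a c x w ∧ Agr c (c+j) y w then p w else 0) * winMarg p c (c+m) (resM hle y)
        = ∑ u : PreIdx n d, ∑ v : PreIdx n d,
            if (Agr a c x w ∧ Agr c (c+j) y w) ∧
                Agr 0 (c+m) (fun i => w i.1) u ∧ Agr c d (fun i => w i.1) v
            then p u * p v else 0 := by
    intro w
    by_cases hC : Agr a c x w ∧ Agr c (c+j) y w
    · rw [if_pos hC]
      have hres : (fun i : {i : Fin d // c ≤ (i:ℕ) ∧ (i:ℕ) < c + m} => w i.1)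
          = resM hle y := by
        funext i
        exact hC.2 i.1 ⟨i.2.1, lt_of_lt_of_le i.2.2 hle⟩
      rw [← hres, hmk w, winMarg_eq_sum, winMarg_eq_sum, Finset.sum_mul_sum]
      refine Finset.sum_congr rfl fun u _ => Finset.sum_congr rfl fun v _ => ?_
      by_cases h1 : Agr 0 (c+m) (fun i => w i.1) u <;>
        by_cases h2 : Agr c d (fun i => w i.1) v <;>
          simp [hC.1, hC.2, h1, h2]
    · rw [if_neg hC, zero_mul]
      refine (Finset.sum_eq_zero fun u _ => Finset.sum_eq_zero fun v _ => ?_).symm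
      exact if_neg (fun hcon :
        (Agr a c x w ∧ Agr c (c+j) y w) ∧
          Agr 0 (c+m) (fun i => w i.1) u ∧ Agr c d (fun i => w i.1) v => hC hcon.1)
  rw [winMatrix_eq_sum p a c (c+j) hac.le (by omega) x y,
      winMatrix_eq_sum p a c (c+m) hac.le (by omega) x (resM hle y),
      winMarg_eq_sum p c (c+j) y,
      Finset.sum_mul, Finset.sum_mul_sum]
  rw [Finset.sum_congr rfl fun w _ => step12 w]
  rw [Finset.sum_comm]
  rw [Finset.sum_congr rfl fun u _ => Finset.sum_comm]
  refine Finset.sum_congr rfl fun u _ => Finset.sum_congr rfl fun v _ => ?_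
  rw [step3 u v]
  by_cases h1 : Agr a c x u ∧ Agr c (c+m) (resM hle y) u <;>
    by_cases h2 : Agr c (c+j) y v <;> simp [h1, h2]

end Aux

/-- Lemma: column spaces for order-`m` Markov models.
For a discrete order-`m` Markov model `p` on `[n_1] × ⋯ × [n_d]`, any `1 ≤ i ≤ k`
(1-based) and any `j ≥ m` with `k + j ≤ d`, the marginal matrix
`p((x_i,…,x_k); (x_{k+1},…,x_{k+j}))` and the marginal matrix
`p((x_i,…,x_k); (x_{k+1},…,x_{k+m}))` have the same column space.
(0-based encoding: rows are the variables in the window `[a, c)` with `a = i - 1`,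
`c = k`, columns those in `[c, c + j)`; `1 ≤ i ≤ k` becomes `a < c`.) -/
theorem higher_order_markov_colSpace_eq
    (d m : ℕ) (hm : 1 ≤ m) (n : ℕ → ℕ) (p : PreIdx n d → ℝ) (hp : IsMarkovOrder m p)
    (a c j : ℕ) (hac : a < c) (hj : m ≤ j) (hcd : c + j ≤ d) :
    colSpace (winMatrix p a c (c + j)) = colSpace (winMatrix p a c (c + m)) := by
  rcases eq_or_lt_of_le hj with heq | hmj
  · subst heq
    rfl
  · have hle : c + m ≤ c + j := by omega
    unfold colSpace
    apply le_antisymm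
    · refine Submodule.span_le.2 ?_
      rintro f ⟨y, rfl⟩
      show (fun r => winMatrix p a c (c + j) r y) ∈ _
      by_cases h0 : winMarg p c (c + m) (resM hle y) = 0
      · have hz : (fun r => winMatrix p a c (c + j) r y) = 0 := by
          funext r
          exact winMatrix_col_zero p hp.1 a c (c + m) (c + j) hac.le (by omega) hle r y h0
        rw [hz]
        exact Submodule.zero_mem _
      · have hfun : (fun r => winMatrix p a c (c + j) r y)
            = (winMarg p c (c + j) y / winMarg p c (c + m) (resM hle y)) •
              (fun r => winMatrix p a c (c + m) r (resM hle y)) := by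
          funext r
          have hk := markov_key p hp a c j hac hmj hcd hle r y
          show winMatrix p a c (c + j) r y
              = (winMarg p c (c + j) y / winMarg p c (c + m) (resM hle y)) *
                winMatrix p a c (c + m) r (resM hle y)
          rw [div_mul_eq_mul_div, eq_div_iff h0, hk]
          ring
        rw [hfun]
        exact Submodule.smul_mem _ _ (Submodule.subset_span ⟨resM hle y, rfl⟩)
    · refine Submodule.span_le.2 ?_
      rintro f ⟨y₁, rfl⟩
      show (fun r => winMatrix p a c (c + m) r y₁) ∈ _
      have hsum : (fun r => winMatrix p a c (c + m) r y₁)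
          = ∑ y₂ : MidIdx n d (c + m) (c + j),
              (fun r => winMatrix p a c (c + j) r (mrg y₁ y₂)) := by
        funext r
        rw [winMatrix_right_marg p a c (c + m) (c + j) hac.le (by omega) hle r y₁]
        simp [Finset.sum_apply]
      rw [hsum]
      exact Submodule.sum_mem _ fun y₂ _ => Submodule.subset_span ⟨mrg y₁ y₂, rfl⟩
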